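/- For the weakly asymmetric random walk with parameter c > 0, for 0 < α, β < 1 with α ≠ β, setting x_N = ⌊αN⌋ and y_N = ⌊βN⌋, the conditional probability that y_N is visited an odd number of times before exit, given that y_N is visited before exit, converges to 1/2: lim_{N→∞} P_{x_N}(G(y_N) ≡ 1 mod 2 | T_{y_N} < τ_N) = 1/2. -/

import Mathlib

open Filter Topology

/-- Position of the nearest-neighbor walk after the steps `w` (`true` = one step right,
`false` = one step left), started from `x`. -/
def walkPos (x : ℤ) (w : List Bool) : ℤ :=
  x + (w.count true : ℤ) - (w.count false : ℤ)

/-- `w` is the step sequence of a trajectory on `{0, 1, …, N}` started at `x` and run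
exactly until the exit time `τ_N = T_0 ∧ T_N`: all positions strictly before the last
step lie strictly inside `(0, N)`, and the final position is `0` or `N`. -/
def IsExitPath (N : ℕ) (x : ℤ) (w : List Bool) : Prop :=
  (∀ k < w.length, 0 < walkPos x (w.take k) ∧ walkPos x (w.take k) < (N : ℤ)) ∧
    (walkPos x w = 0 ∨ walkPos x w = (N : ℤ))

/-- Probability weight of the step sequence `w` when each step goes right with
probability `p` and left with probability `1 - p`, independently. -/
noncomputable def wt (p : ℝ) (w : List Bool) : ℝ :=
  p ^ w.count true * (1 - p) ^ w.count false

/-- `prob N p x S` is the probability, for the walk on `{0, …, N}` with right-step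
probability `p` started at `x` and stopped at the exit time `τ_N`, that its stopped
trajectory (recorded as the step sequence up to time `τ_N`) satisfies `S`. -/
noncomputable def prob (N : ℕ) (p : ℝ) (x : ℤ) (S : List Bool → Prop) : ℝ :=
  ∑' w : List Bool, Set.indicator {w | IsExitPath N x w ∧ S w} (wt p) w

/-- Expectation of `f` of the stopped trajectory for the walk started at `x`. -/
noncomputable def expect (N : ℕ) (p : ℝ) (x : ℤ) (f : List Bool → ℝ) : ℝ :=
  ∑' w : List Bool, Set.indicator {w | IsExitPath N x w} (fun w => wt p w * f w) w

/-- Probability for the walk whose starting point is uniformly distributed on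
`{0, 1, …, N}`; the event `S` may depend on the starting point. -/
noncomputable def probUniform (N : ℕ) (p : ℝ) (S : ℤ → List Bool → Prop) : ℝ :=
  (∑ x ∈ Finset.range (N + 1), prob N p (x : ℤ) (S (x : ℤ))) / (N + 1)

/-- The set of sites visited by the stopped walk up to time `τ_N` (time `0` included). -/
def rangeSet (x : ℤ) (w : List Bool) : Finset ℤ :=
  (Finset.range (w.length + 1)).image fun k => walkPos x (w.take k)

/-- The range `R_N`: the number of distinct sites visited up to the exit time. -/
def rangeCount (x : ℤ) (w : List Bool) : ℕ := (rangeSet x w).card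

/-- The local time `G(y) = Σ_{k=0}^{τ_N} 1_{X_k = y}` of the stopped trajectory `w`. -/
def localTime (x y : ℤ) (w : List Bool) : ℕ :=
  ((Finset.range (w.length + 1)).filter fun k => walkPos x (w.take k) = y).card

/-- The event `T_y < τ_N`: the walk started at `x` visits `y` at some time
`k ≥ 1` strictly before the end of the stopped trajectory `w`. -/
def hitsBefore (x y : ℤ) (w : List Bool) : Prop :=
  ∃ k, 1 ≤ k ∧ k < w.length ∧ walkPos x (w.take k) = y

section AuxWalk
open ENNReal
lemma walkPos_nil (x : ℤ) : walkPos x [] = x := by simp [walkPos]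

lemma walkPos_cons (x : ℤ) (b : Bool) (w : List Bool) :
    walkPos x (b :: w) = walkPos (x + if b then 1 else -1) w := by
  cases b <;> simp [walkPos, List.count_cons] <;> ring

lemma isExitPath_nil {N : ℕ} {x : ℤ} : IsExitPath N x [] ↔ (x = 0 ∨ x = (N:ℤ)) := by
  simp [IsExitPath, walkPos_nil]

lemma isExitPath_cons {N : ℕ} {x : ℤ} {b : Bool} {w : List Bool} :
    IsExitPath N x (b :: w) ↔
      ((0 < x ∧ x < (N:ℤ)) ∧ IsExitPath N (x + if b then 1 else -1) w) := by
  constructor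
  · rintro ⟨h1, h2⟩
    have hx := h1 0 (Nat.succ_pos _)
    simp only [List.take_zero, walkPos_nil] at hx
    refine ⟨hx, fun k hk => ?_, ?_⟩
    · have := h1 (k+1) (by simpa using Nat.succ_lt_succ hk)
      simpa [List.take_succ_cons, walkPos_cons] using this
    · simpa [walkPos_cons] using h2
  · rintro ⟨⟨hx0, hxN⟩, h1, h2⟩
    refine ⟨fun k hk => ?_, by simpa [walkPos_cons] using h2⟩
    cases k with
    | zero => simpa [walkPos_nil] using ⟨hx0, hxN⟩
    | succ k =>
      have := h1 k (by simpa using Nat.lt_of_succ_lt_succ hk)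
      simpa [List.take_succ_cons, walkPos_cons] using this


noncomputable def ewt (p : ℝ) (w : List Bool) : ℝ≥0∞ :=
  (ENNReal.ofReal p) ^ w.count true * (ENNReal.ofReal (1 - p)) ^ w.count false

lemma ewt_nil (p : ℝ) : ewt p [] = 1 := by simp [ewt]

lemma ewt_cons (p : ℝ) (b : Bool) (w : List Bool) :
    ewt p (b :: w) = (if b then ENNReal.ofReal p else ENNReal.ofReal (1-p)) * ewt p w := by
  cases b <;> simp [ewt, List.count_cons, pow_succ] <;> ring

lemma ewt_append (p : ℝ) (w u : List Bool) :
    ewt p (w ++ u) = ewt p w * ewt p u := by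
  simp [ewt, List.count_append, pow_add]; ring

lemma ewt_ne_top (p : ℝ) (w : List Bool) : ewt p w ≠ ⊤ :=
  ENNReal.mul_ne_top (pow_ne_top ofReal_ne_top) (pow_ne_top ofReal_ne_top)

/-- finite set of lists of `Bool` of length `n` -/
def allLists : ℕ → Finset (List Bool)
  | 0 => {[]}
  | (n+1) => (allLists n).image (List.cons true) ∪ (allLists n).image (List.cons false)

lemma mem_allLists {n : ℕ} {w : List Bool} : w ∈ allLists n ↔ w.length = n := by
  induction n generalizing w with
  | zero => cases w <;> simp [allLists]
  | succ n ih =>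
    cases w with
    | nil => simp [allLists]
    | cons b t =>
      cases b <;> simp [allLists, ih]

lemma sum_allLists {p : ℝ} (hp0 : 0 ≤ p) (hp1 : p ≤ 1) (n : ℕ) :
    ∑ w ∈ allLists n, ewt p w = 1 := by
  induction n with
  | zero => simp [allLists, ewt_nil]
  | succ n ih =>
    have hdisj : Disjoint ((allLists n).image (List.cons true))
        ((allLists n).image (List.cons false)) := by
      simp only [Finset.disjoint_left, Finset.mem_image]
      rintro w ⟨u, _, rfl⟩ ⟨v, _, h⟩
      simp at h
    rw [allLists, Finset.sum_union hdisj,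
      Finset.sum_image (by intro a _ b _ h; simpa using h),
      Finset.sum_image (by intro a _ b _ h; simpa using h)]
    simp only [ewt_cons, ← Finset.mul_sum, ih]
    norm_num
    rw [← ENNReal.ofReal_add hp0 (by linarith)]
    norm_num

lemma exit_prefix {N : ℕ} {x : ℤ} {w w' : List Bool} (h : IsExitPath N x w)
    (h' : IsExitPath N x w') (hp : w <+: w') : w = w' := by
  obtain ⟨t, rfl⟩ := hp
  rcases t with _ | ⟨b, t⟩
  · simp
  · exfalso
    have hlen : w.length < (w ++ b :: t).length := by simp
    have h1 := h'.1 w.length hlen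
    rw [List.take_left] at h1
    rcases h.2 with h2 | h2 <;> rw [h2] at h1 <;> [exact lt_irrefl _ h1.1; exact lt_irrefl _ h1.2]

lemma sum_exit_le_one {N : ℕ} {x : ℤ} {p : ℝ} (hp0 : 0 ≤ p) (hp1 : p ≤ 1)
    (F : Finset (List Bool)) (hF : ∀ w ∈ F, IsExitPath N x w) :
    ∑ w ∈ F, ewt p w ≤ 1 := by
  set n := F.sup List.length with hn
  have hlen : ∀ w ∈ F, w.length ≤ n := fun w hw => Finset.le_sup (f := List.length) hw
  have key : ∀ w ∈ F, ewt p w = ∑ u ∈ allLists (n - w.length), ewt p (w ++ u) := by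
    intro w hw
    simp only [ewt_append, ← Finset.mul_sum, sum_allLists hp0 hp1, mul_one]
  rw [Finset.sum_congr rfl key]
  have hsub : ∀ w ∈ F, ∀ u ∈ allLists (n - w.length), w ++ u ∈ allLists n := by
    intro w hw u hu
    rw [mem_allLists] at hu ⊢
    have := hlen w hw
    simp [hu]; omega
  -- rewrite inner sums as sums over images and use biUnion
  have himg : ∀ w ∈ F, ∑ u ∈ allLists (n - w.length), ewt p (w ++ u)
      = ∑ v ∈ (allLists (n - w.length)).image (w ++ ·), ewt p v := by
    intro w _
    rw [Finset.sum_image (by intro a _ b _ h; simpa using h)]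
  rw [Finset.sum_congr rfl himg]
  have hdisj : (F : Set (List Bool)).PairwiseDisjoint
      (fun w => (allLists (n - w.length)).image (w ++ ·)) := by
    intro w hw w' hw' hne
    simp only [Finset.disjoint_left, Finset.mem_image]
    rintro v ⟨u, hu, rfl⟩ ⟨u', hu', h⟩
    rcases List.prefix_or_prefix_of_prefix (List.prefix_append w u)
      (h ▸ List.prefix_append w' u') with hpre | hpre
    · exact hne (exit_prefix (hF w hw) (hF w' hw') hpre)
    · exact hne (exit_prefix (hF w' hw') (hF w hw) hpre).symm
  rw [← Finset.sum_biUnion hdisj]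
  calc ∑ v ∈ F.biUnion (fun w => (allLists (n - w.length)).image (w ++ ·)), ewt p v
      ≤ ∑ v ∈ allLists n, ewt p v := by
        apply Finset.sum_le_sum_of_subset
        intro v hv
        simp only [Finset.mem_biUnion, Finset.mem_image] at hv
        obtain ⟨w, hw, u, hu, rfl⟩ := hv
        exact hsub w hw u hu
    _ = 1 := sum_allLists hp0 hp1 n


noncomputable def eP (N : ℕ) (p : ℝ) (x : ℤ) (S : List Bool → Prop) : ℝ≥0∞ :=
  ∑' w : List Bool, Set.indicator {w | IsExitPath N x w ∧ S w} (ewt p) w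

lemma eP_def (N : ℕ) (p : ℝ) (x : ℤ) (S : List Bool → Prop) :
    eP N p x S = ∑' w : List Bool, Set.indicator {w | IsExitPath N x w ∧ S w} (ewt p) w := rfl

section
variable {N : ℕ} {x : ℤ} {p : ℝ}


lemma eP_congr {S T : List Bool → Prop}
    (h : ∀ w, IsExitPath N x w → (S w ↔ T w)) : eP N p x S = eP N p x T := by
  unfold eP
  congr 1
  ext w
  congr 1
  ext v
  simp only [Set.mem_setOf_eq]
  exact and_congr_right (h v)

lemma eP_le_one (hp0 : 0 ≤ p) (hp1 : p ≤ 1) (S : List Bool → Prop) : eP N p x S ≤ 1 := by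
  rw [eP, ENNReal.tsum_eq_iSup_sum]
  apply iSup_le
  intro F
  classical
  calc ∑ w ∈ F, Set.indicator {w | IsExitPath N x w ∧ S w} (ewt p) w
      ≤ ∑ w ∈ F.filter (fun w => IsExitPath N x w ∧ S w), ewt p w := by
        rw [Finset.sum_filter]
        apply Finset.sum_le_sum
        intro w _
        by_cases h : IsExitPath N x w ∧ S w <;> simp [Set.indicator, h]
    _ ≤ 1 := sum_exit_le_one hp0 hp1 _ (fun w hw => ((Finset.mem_filter.mp hw).2).1)

lemma eP_ne_top (hp0 : 0 ≤ p) (hp1 : p ≤ 1) (S : List Bool → Prop) : eP N p x S ≠ ⊤ :=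
  (lt_of_le_of_lt (eP_le_one hp0 hp1 S) one_lt_top).ne

lemma eP_add (S T : List Bool → Prop) :
    eP N p x S = eP N p x (fun w => S w ∧ T w) + eP N p x (fun w => S w ∧ ¬ T w) := by
  classical
  unfold eP
  rw [← ENNReal.tsum_add]
  congr 1
  ext w
  by_cases hE : IsExitPath N x w
  · by_cases hS : S w
    · by_cases hT : T w <;> simp [Set.indicator, hE, hS, hT]
    · simp [Set.indicator, hE, hS]
  · simp [Set.indicator, hE]

lemma eP_boundary (hx : x = 0 ∨ x = (N:ℤ)) (S : List Bool → Prop) [Decidable (S [])] :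
    eP N p x S = if S [] then 1 else 0 := by
  unfold eP
  rw [tsum_eq_single []]
  · by_cases h : S [] <;> simp [Set.indicator, isExitPath_nil, hx, h, ewt_nil]
  · intro w hw
    rcases w with _ | ⟨b, t⟩
    · exact absurd rfl hw
    · apply Set.indicator_of_notMem
      simp only [Set.mem_setOf_eq, isExitPath_cons]
      rintro ⟨⟨⟨h1, h2⟩, _⟩, _⟩
      rcases hx with rfl | rfl
      · exact lt_irrefl _ h1
      · exact lt_irrefl _ h2

lemma tsum_cons_split (f : List Bool → ℝ≥0∞) (h0 : f [] = 0) :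
    ∑' w : List Bool, f w = (∑' w : List Bool, f (true :: w)) + ∑' w : List Bool, f (false :: w) := by
  have : ∑' w : List Bool, f w = ∑' bw : Bool × List Bool, f (bw.1 :: bw.2) := by
    apply tsum_eq_tsum_of_ne_zero_bij (fun x => x.1.1 :: x.1.2)
    · rintro ⟨⟨b, w⟩, _⟩ ⟨⟨b', w'⟩, _⟩ h
      simpa using h
    · intro w hw
      rcases w with _ | ⟨b, t⟩
      · exact absurd h0 hw
      · exact ⟨⟨(b, t), hw⟩, rfl⟩
    · intro x; rfl
  rw [this, ENNReal.tsum_prod (f := fun b w => f (b :: w)), tsum_bool, add_comm]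


lemma eP_rec (hx0 : 0 < x) (hxN : x < (N:ℤ)) (S : List Bool → Prop) :
    eP N p x S = ENNReal.ofReal p * eP N p (x+1) (fun w => S (true :: w))
      + ENNReal.ofReal (1-p) * eP N p (x-1) (fun w => S (false :: w)) := by
  classical
  rw [eP_def]
  rw [tsum_cons_split _ (by
    apply Set.indicator_of_notMem
    simp only [Set.mem_setOf_eq, isExitPath_nil]
    rintro ⟨h | h, _⟩ <;> omega)]
  congr 1
  · rw [eP_def, ← ENNReal.tsum_mul_left]
    congr 1
    ext w
    have hiff : (IsExitPath N x (true :: w) ∧ S (true :: w)) ↔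
        (IsExitPath N (x+1) w ∧ S (true :: w)) := by
      rw [isExitPath_cons]
      constructor
      · rintro ⟨⟨_, h⟩, hs⟩; exact ⟨by simpa using h, hs⟩
      · rintro ⟨h, hs⟩; exact ⟨⟨⟨hx0, hxN⟩, by simpa using h⟩, hs⟩
    rw [Set.indicator_apply, Set.indicator_apply]
    simp only [Set.mem_setOf_eq, hiff]
    by_cases h : IsExitPath N (x+1) w ∧ S (true :: w) <;> simp [h, ewt_cons]
  · rw [eP_def, ← ENNReal.tsum_mul_left]
    congr 1
    ext w
    have hxx : x + -1 = x - 1 := by ring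
    have hiff : (IsExitPath N x (false :: w) ∧ S (false :: w)) ↔
        (IsExitPath N (x-1) w ∧ S (false :: w)) := by
      rw [isExitPath_cons]
      constructor
      · rintro ⟨⟨_, h⟩, hs⟩; exact ⟨by simpa [hxx] using h, hs⟩
      · rintro ⟨h, hs⟩; exact ⟨⟨⟨hx0, hxN⟩, by simpa [hxx] using h⟩, hs⟩
    rw [Set.indicator_apply, Set.indicator_apply]
    simp only [Set.mem_setOf_eq, hiff]
    by_cases h : IsExitPath N (x-1) w ∧ S (false :: w) <;> simp [h, ewt_cons]

lemma eP_rec_real (hp0 : 0 ≤ p) (hp1 : p ≤ 1) (hx0 : 0 < x) (hxN : x < (N:ℤ))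
    (S : List Bool → Prop) :
    (eP N p x S).toReal = p * (eP N p (x+1) (fun w => S (true :: w))).toReal
      + (1-p) * (eP N p (x-1) (fun w => S (false :: w))).toReal := by
  rw [eP_rec hx0 hxN S]
  have h1 : ENNReal.ofReal p * eP N p (x+1) (fun w => S (true :: w)) ≠ ⊤ :=
    ENNReal.mul_ne_top ofReal_ne_top (lt_of_le_of_lt (eP_le_one hp0 hp1 _) one_lt_top).ne
  have h2 : ENNReal.ofReal (1-p) * eP N p (x-1) (fun w => S (false :: w)) ≠ ⊤ :=
    ENNReal.mul_ne_top ofReal_ne_top (lt_of_le_of_lt (eP_le_one hp0 hp1 _) one_lt_top).ne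
  rw [ENNReal.toReal_add h1 h2, ENNReal.toReal_mul, ENNReal.toReal_mul,
    ENNReal.toReal_ofReal hp0, ENNReal.toReal_ofReal (by linarith)]


end


lemma prob_eq_toReal {N : ℕ} {x : ℤ} {p : ℝ} (hp0 : 0 ≤ p) (hp1 : p ≤ 1)
    (S : List Bool → Prop) : prob N p x S = (eP N p x S).toReal := by
  rw [eP, ENNReal.tsum_toReal_eq (fun w => by
    by_cases h : w ∈ {w | IsExitPath N x w ∧ S w}
    · rw [Set.indicator_of_mem h]; exact ewt_ne_top p w
    · rw [Set.indicator_of_notMem h]; exact zero_ne_top)]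
  unfold prob
  congr 1
  ext w
  by_cases h : w ∈ {w | IsExitPath N x w ∧ S w}
  · rw [Set.indicator_of_mem h, Set.indicator_of_mem h, ewt, wt, ENNReal.toReal_mul,
      ENNReal.toReal_pow, ENNReal.toReal_pow, ENNReal.toReal_ofReal hp0,
      ENNReal.toReal_ofReal (by linarith)]
  · rw [Set.indicator_of_notMem h, Set.indicator_of_notMem h, ENNReal.toReal_zero]

/-- visiting event (time 0 allowed) -/
def Svisit (y x : ℤ) (w : List Bool) : Prop :=
  ∃ k, k ≤ w.length ∧ walkPos x (w.take k) = y

lemma svisit_self {y x : ℤ} (h : x = y) (w : List Bool) : Svisit y x w :=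
  ⟨0, Nat.zero_le _, by simpa [walkPos_nil] using h⟩

lemma svisit_cons {y x : ℤ} (hxy : x ≠ y) (b : Bool) (w : List Bool) :
    Svisit y x (b :: w) ↔ Svisit y (x + if b then 1 else -1) w := by
  constructor
  · rintro ⟨k, hk, hw⟩
    cases k with
    | zero => exact absurd (by simpa [walkPos_nil] using hw) hxy
    | succ k =>
      refine ⟨k, by simpa using hk, ?_⟩
      rw [List.take_succ_cons, walkPos_cons] at hw
      exact hw
  · rintro ⟨k, hk, hw⟩
    exact ⟨k + 1, by simpa using hk, by rw [List.take_succ_cons, walkPos_cons]; exact hw⟩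

lemma localTime_card_eq (x y : ℤ) (w : List Bool) :
    (localTime x y w : ℕ) = ∑ k ∈ Finset.range (w.length + 1),
      if walkPos x (w.take k) = y then 1 else 0 := by
  classical
  rw [localTime, Finset.card_filter]

lemma localTime_cons (x y : ℤ) (b : Bool) (w : List Bool) :
    localTime x y (b :: w) = (if x = y then 1 else 0)
      + localTime (x + if b then 1 else -1) y w := by
  classical
  rw [localTime_card_eq, localTime_card_eq]
  have : (b :: w).length + 1 = (w.length + 1) + 1 := by simp
  rw [this, Finset.sum_range_succ']
  simp only [List.take_succ_cons, walkPos_cons, List.take_zero, walkPos_nil]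
  rw [add_comm]

lemma localTime_pos_of_mem {x y : ℤ} {w : List Bool} {k : ℕ} (hk : k ≤ w.length)
    (hw : walkPos x (w.take k) = y) : 0 < localTime x y w := by
  rw [localTime, Finset.card_pos]
  exact ⟨k, Finset.mem_filter.mpr ⟨Finset.mem_range.mpr (by omega), hw⟩⟩

lemma svisit_of_localTime_pos {x y : ℤ} {w : List Bool} (h : 0 < localTime x y w) :
    Svisit y x w := by
  rw [localTime, Finset.card_pos] at h
  obtain ⟨k, hk⟩ := h
  rw [Finset.mem_filter, Finset.mem_range] at hk
  exact ⟨k, by omega, hk.2⟩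

lemma hitsBefore_iff_svisit {N : ℕ} {x y : ℤ} {w : List Bool} (hxy : x ≠ y)
    (hy0 : 0 < y) (hyN : y < (N:ℤ)) (hE : IsExitPath N x w) :
    hitsBefore x y w ↔ Svisit y x w := by
  constructor
  · rintro ⟨k, hk1, hk2, hw⟩
    exact ⟨k, by omega, hw⟩
  · rintro ⟨k, hk, hw⟩
    refine ⟨k, ?_, ?_, hw⟩
    · rcases Nat.eq_zero_or_pos k with rfl | h
      · exact absurd (by simpa [walkPos_nil] using hw) hxy
      · omega
    · rcases Nat.lt_or_ge k w.length with h | h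
      · exact h
      · exfalso
        have hkl : k = w.length := le_antisymm hk h
        rw [hkl, List.take_length] at hw
        rcases hE.2 with h2 | h2 <;> rw [h2] at hw <;> omega

lemma odd_implies_hits {N : ℕ} {x y : ℤ} {w : List Bool} (hxy : x ≠ y)
    (hy0 : 0 < y) (hyN : y < (N:ℤ)) (hE : IsExitPath N x w)
    (h : localTime x y w % 2 = 1) : hitsBefore x y w := by
  rw [hitsBefore_iff_svisit hxy hy0 hyN hE]
  exact svisit_of_localTime_pos (by omega)


/-- Uniqueness for the discrete Dirichlet problem. -/
lemma harmonic_unique {p q : ℝ} (hp : 0 < p) (hq : 0 < q) (hpq : p + q = 1)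
    {a b : ℤ} {f : ℤ → ℝ}
    (hf : ∀ z : ℤ, a < z → z < b → f z = p * f (z+1) + q * f (z-1))
    (ha : f a = 0) (hb : f b = 0) : ∀ z : ℤ, a ≤ z → z ≤ b → f z = 0 := by
  rcases le_or_gt b a with hba | hab
  · intro z hz1 hz2
    have : z = a ∨ z = b := by omega
    rcases this with rfl | rfl <;> assumption
  · set m := (b - a).toNat with hm
    have hmpos : 0 < m := by omega
    have ham : a + m = b := by omega
    set g : ℕ → ℝ := fun k => f (a + k) with hg
    have hrec : ∀ k : ℕ, k + 1 < m → g (k+1) = p * g (k+2) + q * g k := by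
      intro k hk
      have h1 : a < a + (k+1) := by omega
      have h2 : (a + (k+1) : ℤ) < b := by omega
      have := hf (a + (k+1)) h1 h2
      simp only [hg]
      convert this using 3 <;> push_cast <;> ring_nf
    set d : ℕ → ℝ := fun k => g (k+1) - g k with hd
    have hdstep : ∀ k : ℕ, k + 1 < m → d (k+1) = (q/p) * d k := by
      intro k hk
      have h := hrec k hk
      have hp' : p ≠ 0 := ne_of_gt hp
      simp only [hd]
      rw [div_mul_eq_mul_div, eq_div_iff hp']
      linear_combination -h - g (k+1) * hpq
    have hdk : ∀ k, k < m → d k = (q/p)^k * d 0 := by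
      intro k
      induction k with
      | zero => intro _; simp
      | succ k ih =>
        intro hk
        rw [hdstep k hk, ih (by omega), pow_succ]
        ring
    have hsum : ∀ k : ℕ, ∑ j ∈ Finset.range k, d j = g k - g 0 := by
      intro k
      exact Finset.sum_range_sub g k
    have hgm : g m = 0 := by simp [hg, ham, hb]
    have hg0 : g 0 = 0 := by simp [hg, ha]
    have hd0 : d 0 = 0 := by
      have h1 : ∑ j ∈ Finset.range m, d j = 0 := by rw [hsum, hgm, hg0]; ring
      have h2 : ∑ j ∈ Finset.range m, d j = (∑ j ∈ Finset.range m, (q/p)^j) * d 0 := by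
        rw [Finset.sum_mul]
        exact Finset.sum_congr rfl fun j hj => hdk j (Finset.mem_range.mp hj)
      have hpos : 0 < ∑ j ∈ Finset.range m, (q/p)^j := by
        apply Finset.sum_pos
        · intro j _
          positivity
        · exact ⟨0, Finset.mem_range.mpr hmpos⟩
      rw [h2] at h1
      exact by
        rcases mul_eq_zero.mp h1 with h | h
        · exact absurd h (ne_of_gt hpos)
        · exact h
    have hdall : ∀ k, k < m → d k = 0 := by
      intro k hk
      rw [hdk k hk, hd0, mul_zero]
    have hgall : ∀ k, k ≤ m → g k = 0 := by
      intro k hk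
      have : ∑ j ∈ Finset.range k, d j = 0 :=
        Finset.sum_eq_zero (fun j hj => hdall j (by
          have := Finset.mem_range.mp hj; omega))
      have h2 := hsum k
      rw [this] at h2
      linarith [hg0]
    intro z hz1 hz2
    have hk : z = a + ((z - a).toNat : ℤ) := by omega
    have h5 := hgall (z - a).toNat (by omega)
    simp only [hg] at h5
    rw [← hk] at h5
    exact h5

/-- harmonicity of `A + B ρ^z` for `ρ = q/p`. -/
lemma geom_harmonic {p : ℝ} (hp : 0 < p) (hp1 : p < 1) (A B : ℝ) (z : ℤ) :
    A + B * ((1-p)/p)^z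
      = p * (A + B * ((1-p)/p)^(z+1)) + (1-p) * (A + B * ((1-p)/p)^(z-1)) := by
  have hq : (0:ℝ) < 1 - p := by linarith
  have hρ : ((1-p)/p) ≠ 0 := by positivity
  rw [zpow_add₀ hρ, zpow_sub₀ hρ]
  field_simp
  ring


lemma localTime_nil' (x y : ℤ) : localTime x y [] = if x = y then 1 else 0 := by
  classical
  simp only [localTime, List.length_nil, zero_add, Finset.range_one, List.take_nil,
    walkPos_nil, Finset.filter_singleton]
  split <;> simp

noncomputable def Mfun (N : ℕ) (p : ℝ) (x : ℤ) : ℝ := (eP N p x (fun _ => True)).toReal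
noncomputable def Ufun (N : ℕ) (p : ℝ) (y x : ℤ) : ℝ := (eP N p x (Svisit y x)).toReal
noncomputable def Ffun (N : ℕ) (p : ℝ) (y x : ℤ) : ℝ :=
  (eP N p x (fun w => localTime x y w % 2 = 1)).toReal

theorem key (N : ℕ) (p : ℝ) (hp : 1/2 < p) (hp1 : p < 1) (x y : ℤ)
    (hx0 : 0 < x) (hxN : x < (N:ℤ)) (hy0 : 0 < y) (hyN : y < (N:ℤ)) (hxy : x ≠ y) :
    prob N p x (fun w => localTime x y w % 2 = 1 ∧ hitsBefore x y w) /
      prob N p x (fun w => hitsBefore x y w)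
    = 1 / (1 + (p * (((1-p)/p - ((1-p)/p)^(N-y:ℤ)) / (1 - ((1-p)/p)^(N-y:ℤ)))
        + (1-p) * ((1 - ((1-p)/p)^(y-1:ℤ)) / (1 - ((1-p)/p)^(y:ℤ))))) := by
  classical
  have hp0 : (0:ℝ) < p := by linarith
  have hq0 : (0:ℝ) < 1 - p := by linarith
  have hp0' : (0:ℝ) ≤ p := le_of_lt hp0
  have hp1' : p ≤ 1 := le_of_lt hp1
  have hpq : p + (1 - p) = 1 := by ring
  set ρ : ℝ := (1-p)/p with hρ
  have hρ0 : 0 < ρ := by positivity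
  have hρ1 : ρ < 1 := by rw [hρ, div_lt_one hp0]; linarith
  have hρ1' : ρ ≤ 1 := le_of_lt hρ1
  -- M ≡ 1 on [0, N]
  have M_harm : ∀ z : ℤ, 0 < z → z < (N:ℤ) →
      Mfun N p z = p * Mfun N p (z+1) + (1-p) * Mfun N p (z-1) := by
    intro z h1 h2
    exact eP_rec_real hp0' hp1' h1 h2 (fun _ => True)
  have M_boundary : ∀ z : ℤ, z = 0 ∨ z = (N:ℤ) → Mfun N p z = 1 := by
    intro z hz
    rw [Mfun, eP_boundary hz]
    simp
  have M_one : ∀ z : ℤ, 0 ≤ z → z ≤ (N:ℤ) → Mfun N p z = 1 := by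
    intro z hz1 hz2
    have := harmonic_unique hp0 hq0 hpq (a := 0) (b := (N:ℤ))
      (f := fun z => Mfun N p z - 1)
      (fun z h1 h2 => by
        have hM := M_harm z h1 h2
        linear_combination hM)
      (by simp [M_boundary 0 (Or.inl rfl)])
      (by simp [M_boundary (N:ℤ) (Or.inr rfl)]) z hz1 hz2
    linarith
  -- U basic facts
  have U_harm : ∀ z : ℤ, 0 < z → z < (N:ℤ) → z ≠ y →
      Ufun N p y z = p * Ufun N p y (z+1) + (1-p) * Ufun N p y (z-1) := by
    intro z h1 h2 hzy
    rw [Ufun, eP_rec_real hp0' hp1' h1 h2]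
    congr 2
    · exact congrArg ENNReal.toReal (eP_congr (fun w _ => by
        have := svisit_cons hzy true w
        simpa using this))
    · exact congrArg ENNReal.toReal (eP_congr (fun w _ => by
        have := svisit_cons hzy false w
        simpa [show z + -1 = z - 1 from by ring] using this))
  have U_boundary : ∀ z : ℤ, z = 0 ∨ z = (N:ℤ) → Ufun N p y z = 0 := by
    intro z hz
    rw [Ufun, eP_boundary hz]
    have : ¬ Svisit y z [] := by
      rintro ⟨k, hk, hw⟩
      have hk0 : k = 0 := by simpa using hk
      subst hk0
      rw [List.take_nil, walkPos_nil] at hw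
      rcases hz with rfl | rfl <;> omega
    simp [this]
  have U_at_y : Ufun N p y y = 1 := by
    rw [Ufun, eP_congr (T := fun _ => True) (fun w _ => by simp [svisit_self rfl w])]
    exact M_one y (le_of_lt hy0) (le_of_lt hyN)
  -- F basic facts
  have F_harm : ∀ z : ℤ, 0 < z → z < (N:ℤ) → z ≠ y →
      Ffun N p y z = p * Ffun N p y (z+1) + (1-p) * Ffun N p y (z-1) := by
    intro z h1 h2 hzy
    rw [Ffun, eP_rec_real hp0' hp1' h1 h2]
    congr 2
    · exact congrArg ENNReal.toReal (eP_congr (fun w _ => by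
        rw [localTime_cons]
        simp [hzy]))
    · exact congrArg ENNReal.toReal (eP_congr (fun w _ => by
        rw [localTime_cons]
        simp [hzy, show z + -1 = z - 1 from by ring]))
  have F_boundary : ∀ z : ℤ, z = 0 ∨ z = (N:ℤ) → Ffun N p y z = 0 := by
    intro z hz
    rw [Ffun, eP_boundary hz]
    have hzy : z ≠ y := by rcases hz with rfl | rfl <;> omega
    simp [localTime_nil', hzy]
  -- even probability = M - F
  have F_even : ∀ z : ℤ,
      (eP N p z (fun w => localTime z y w % 2 = 0)).toReal = Mfun N p z - Ffun N p y z := by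
    intro z
    have hsplit := eP_add (N := N) (x := z) (p := p) (fun _ => True)
      (fun w => localTime z y w % 2 = 1)
    have h1 : eP N p z (fun w => True ∧ localTime z y w % 2 = 1)
        = eP N p z (fun w => localTime z y w % 2 = 1) := eP_congr (fun w _ => by tauto)
    have h2 : eP N p z (fun w => True ∧ ¬ (localTime z y w % 2 = 1))
        = eP N p z (fun w => localTime z y w % 2 = 0) := eP_congr (fun w _ => by
          constructor
          · rintro ⟨_, h⟩; omega
          · intro h; exact ⟨trivial, by omega⟩)
    rw [h1, h2] at hsplit
    have hfin1 : eP N p z (fun w => localTime z y w % 2 = 1) ≠ ⊤ :=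
      (lt_of_le_of_lt (eP_le_one hp0' hp1' _) one_lt_top).ne
    have hfin2 : eP N p z (fun w => localTime z y w % 2 = 0) ≠ ⊤ :=
      (lt_of_le_of_lt (eP_le_one hp0' hp1' _) one_lt_top).ne
    have := congrArg ENNReal.toReal hsplit
    rw [ENNReal.toReal_add hfin1 hfin2] at this
    rw [Mfun, this, Ffun]
    ring
  -- equation at y
  have F_at_y : Ffun N p y y = p * (Mfun N p (y+1) - Ffun N p y (y+1))
      + (1-p) * (Mfun N p (y-1) - Ffun N p y (y-1)) := by
    rw [Ffun, eP_rec_real hp0' hp1' hy0 hyN]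
    congr 2
    · rw [← F_even (y+1)]
      exact congrArg ENNReal.toReal (eP_congr (fun w _ => by
        rw [localTime_cons]
        simp
        omega))
    · rw [← F_even (y-1)]
      exact congrArg ENNReal.toReal (eP_congr (fun w _ => by
        rw [localTime_cons]
        simp [show y + -1 = y - 1 from by ring]
        omega))
  -- closed forms
  have hzy0 : (0:ℝ) < 1 - ρ^(y:ℤ) := by
    have := zpow_lt_one₀ hρ0 hρ1 hy0
    linarith
  have hzN0 : (0:ℝ) < 1 - ρ^(N-y:ℤ) := by
    have := zpow_lt_one₀ hρ0 hρ1 (by omega : (0:ℤ) < N - y)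
    linarith
  set cL : ℤ → ℝ := fun z => (1 - ρ^z) / (1 - ρ^(y:ℤ)) with hcL
  set cR : ℤ → ℝ := fun z => (ρ^(z-y:ℤ) - ρ^(N-y:ℤ)) / (1 - ρ^(N-y:ℤ)) with hcR
  have cL_eq : ∀ z : ℤ, cL z = 1/(1 - ρ^(y:ℤ)) + (-(1/(1 - ρ^(y:ℤ)))) * ρ^z := by
    intro z
    simp only [hcL]
    field_simp
    ring
  have cL_harm : ∀ z : ℤ, cL z = p * cL (z+1) + (1-p) * cL (z-1) := by
    intro z
    rw [cL_eq z, cL_eq (z+1), cL_eq (z-1)]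
    exact geom_harmonic hp0 hp1 _ _ z
  have hρy : ρ ^ (-y : ℤ) ≠ 0 := by positivity
  have cR_eq : ∀ z : ℤ, cR z = (-(ρ^(N-y:ℤ))/(1 - ρ^(N-y:ℤ)))
      + (ρ^(-y:ℤ)/(1 - ρ^(N-y:ℤ))) * ρ^z := by
    intro z
    simp only [hcR]
    rw [show (z - y : ℤ) = -y + z from by ring, zpow_add₀ (ne_of_gt hρ0)]
    field_simp
    ring
  have cR_harm : ∀ z : ℤ, cR z = p * cR (z+1) + (1-p) * cR (z-1) := by
    intro z
    rw [cR_eq z, cR_eq (z+1), cR_eq (z-1)]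
    exact geom_harmonic hp0 hp1 _ _ z
  have cL_0 : cL 0 = 0 := by simp [hcL]
  have cL_y : cL y = 1 := by
    simp only [hcL]
    field_simp
  have cR_y : cR y = 1 := by
    simp only [hcR]
    rw [show (y - y : ℤ) = 0 from by ring]
    field_simp
  have cR_N : cR (N:ℤ) = 0 := by simp [hcR]
  -- U = cL on [0, y]
  have U_eq_cL : ∀ z : ℤ, 0 ≤ z → z ≤ y → Ufun N p y z = cL z := by
    intro z hz1 hz2
    have := harmonic_unique hp0 hq0 hpq (a := 0) (b := y)
      (f := fun z => Ufun N p y z - cL z)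
      (fun z h1 h2 => by
        have hU := U_harm z h1 (by omega) (by omega)
        have hcLh := cL_harm z
        linear_combination hU - hcLh)
      (by rw [U_boundary 0 (Or.inl rfl), cL_0]; ring)
      (by rw [U_at_y, cL_y]; ring) z hz1 hz2
    linarith
  have U_eq_cR : ∀ z : ℤ, y ≤ z → z ≤ (N:ℤ) → Ufun N p y z = cR z := by
    intro z hz1 hz2
    have := harmonic_unique hp0 hq0 hpq (a := y) (b := (N:ℤ))
      (f := fun z => Ufun N p y z - cR z)
      (fun z h1 h2 => by
        have hU := U_harm z (by omega) h2 (by omega)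
        have hc := cR_harm z
        linear_combination hU - hc)
      (by rw [U_at_y, cR_y]; ring)
      (by rw [U_boundary (N:ℤ) (Or.inr rfl), cR_N]; ring) z hz1 hz2
    linarith
  set φ : ℝ := Ffun N p y y with hφ
  have F_eq_cL : ∀ z : ℤ, 0 ≤ z → z ≤ y → Ffun N p y z = φ * cL z := by
    intro z hz1 hz2
    have := harmonic_unique hp0 hq0 hpq (a := 0) (b := y)
      (f := fun z => Ffun N p y z - φ * cL z)
      (fun z h1 h2 => by
        have hF := F_harm z h1 (by omega) (by omega)
        have hc := cL_harm z
        linear_combination hF - φ * hc)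
      (by rw [F_boundary 0 (Or.inl rfl), cL_0]; ring)
      (by rw [cL_y, ← hφ]; ring) z hz1 hz2
    linarith
  have F_eq_cR : ∀ z : ℤ, y ≤ z → z ≤ (N:ℤ) → Ffun N p y z = φ * cR z := by
    intro z hz1 hz2
    have := harmonic_unique hp0 hq0 hpq (a := y) (b := (N:ℤ))
      (f := fun z => Ffun N p y z - φ * cR z)
      (fun z h1 h2 => by
        have hF := F_harm z (by omega) h2 (by omega)
        have hc := cR_harm z
        linear_combination hF - φ * hc)
      (by rw [cR_y, ← hφ]; ring)
      (by rw [F_boundary (N:ℤ) (Or.inr rfl), cR_N]; ring) z hz1 hz2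
    linarith
  -- the return quantity
  set r : ℝ := p * cR (y+1) + (1-p) * cL (y-1) with hr
  have hcRy1 : cR (y+1) = (ρ - ρ^(N-y:ℤ)) / (1 - ρ^(N-y:ℤ)) := by
    simp only [hcR]
    rw [show (y + 1 - y : ℤ) = 1 from by ring, zpow_one]
  have hcLy1 : cL (y-1) = (1 - ρ^(y-1:ℤ)) / (1 - ρ^(y:ℤ)) := rfl
  have hcR_nonneg : 0 ≤ cR (y+1) := by
    rw [hcRy1]
    apply div_nonneg _ (le_of_lt hzN0)
    have : ρ^(N-y:ℤ) ≤ ρ^(1:ℤ) :=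
      zpow_le_zpow_right_of_le_one₀ hρ0 hρ1' (by omega)
    rw [zpow_one] at this
    linarith
  have hcL_nonneg : 0 ≤ cL (y-1) := by
    rw [hcLy1]
    apply div_nonneg _ (le_of_lt hzy0)
    have : ρ^(y-1:ℤ) ≤ ρ^(0:ℤ) :=
      zpow_le_zpow_right_of_le_one₀ hρ0 hρ1' (by omega)
    simp only [zpow_zero] at this
    linarith
  have hr_nonneg : 0 ≤ r := by
    rw [hr]
    have := mul_nonneg (le_of_lt hp0) hcR_nonneg
    have := mul_nonneg (le_of_lt hq0) hcL_nonneg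
    linarith
  have h1r : (0:ℝ) < 1 + r := by linarith
  -- the value of φ
  have hφ_val : φ = 1 / (1 + r) := by
    have hFy1 : Ffun N p y (y+1) = φ * cR (y+1) := F_eq_cR (y+1) (by omega) (by omega)
    have hFy2 : Ffun N p y (y-1) = φ * cL (y-1) := F_eq_cL (y-1) (by omega) (by omega)
    have hM1 : Mfun N p (y+1) = 1 := M_one (y+1) (by omega) (by omega)
    have hM2 : Mfun N p (y-1) = 1 := M_one (y-1) (by omega) (by omega)
    have heq := F_at_y
    rw [hFy1, hFy2, hM1, hM2] at heq
    have hh : φ * (1 + r) = 1 := by rw [hr]; linear_combination heq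
    rw [eq_div_iff (ne_of_gt h1r)]
    exact hh
  -- identify the ratio
  have hprob1 : prob N p x (fun w => localTime x y w % 2 = 1 ∧ hitsBefore x y w)
      = Ffun N p y x := by
    rw [prob_eq_toReal hp0' hp1', Ffun]
    exact congrArg ENNReal.toReal (eP_congr (fun w hE => by
      constructor
      · exact fun h => h.1
      · exact fun h => ⟨h, odd_implies_hits hxy hy0 hyN hE h⟩))
  have hprob2 : prob N p x (fun w => hitsBefore x y w) = Ufun N p y x := by
    rw [prob_eq_toReal hp0' hp1', Ufun]
    exact congrArg ENNReal.toReal (eP_congr (fun w hE =>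
      hitsBefore_iff_svisit hxy hy0 hyN hE))
  rw [hprob1, hprob2]
  rcases lt_or_gt_of_ne hxy with hlt | hgt
  · have hU : Ufun N p y x = cL x := U_eq_cL x (by omega) (by omega)
    have hF : Ffun N p y x = φ * cL x := F_eq_cL x (by omega) (by omega)
    have hcLx : 0 < cL x := by
      simp only [hcL]
      apply div_pos _ hzy0
      have := zpow_lt_one₀ hρ0 hρ1 hx0
      linarith
    rw [hU, hF, mul_div_assoc, div_self (ne_of_gt hcLx), mul_one, hφ_val, hr,
      hcRy1, hcLy1]
  · have hU : Ufun N p y x = cR x := U_eq_cR x (by omega) (by omega)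
    have hF : Ffun N p y x = φ * cR x := F_eq_cR x (by omega) (by omega)
    have hcRx : 0 < cR x := by
      simp only [hcR]
      apply div_pos _ hzN0
      have := zpow_lt_zpow_right_of_lt_one₀ hρ0 hρ1 (show (x - y : ℤ) < (N - y : ℤ) from by omega)
      linarith
    rw [hU, hF, mul_div_assoc, div_self (ne_of_gt hcRx), mul_one, hφ_val, hr,
      hcRy1, hcLy1]


lemma zpow_le_exp_aux {ρ t : ℝ} (h0 : 0 ≤ ρ) {m : ℤ} (hm : 0 ≤ m)
    (ht : t ≤ (1-ρ) * m) : ρ^m ≤ Real.exp (-t) := by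
  lift m to ℕ using hm
  rw [zpow_natCast]
  calc ρ^m ≤ (Real.exp (ρ-1))^m := by
        apply pow_le_pow_left₀ h0
        have := Real.add_one_le_exp (ρ-1)
        linarith
    _ = Real.exp ((ρ-1) * m) := by
        rw [mul_comm, Real.exp_nat_mul]
    _ ≤ Real.exp (-t) := by
        apply Real.exp_le_exp.mpr
        push_cast at ht ⊢
        linarith

end AuxWalk

set_option maxHeartbeats 2000000 in
/-- Proposition 4.3 (weakly asymmetric case): for `p_N = 1/2 + c/N`, the conditional
probability that `⌊βN⌋` is visited an odd number of times, given that it is visited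
before exit, tends to `1/2`. -/theorem odd_parity_conditional_weakly_asymmetric (c α β : ℝ) (hc : 0 < c)
    (hα0 : 0 < α) (hα1 : α < 1) (hβ0 : 0 < β) (hβ1 : β < 1) (hαβ : α ≠ β) :
    Tendsto (fun N : ℕ =>
        prob N (1/2 + c / (N : ℝ)) ⌊α * (N : ℝ)⌋
            (fun w => localTime ⌊α * (N : ℝ)⌋ ⌊β * (N : ℝ)⌋ w % 2 = 1 ∧
              hitsBefore ⌊α * (N : ℝ)⌋ ⌊β * (N : ℝ)⌋ w) /
          prob N (1/2 + c / (N : ℝ)) ⌊α * (N : ℝ)⌋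
            (fun w => hitsBefore ⌊α * (N : ℝ)⌋ ⌊β * (N : ℝ)⌋ w))
      atTop (𝓝 (1/2)) := by
  have hN : Tendsto (fun N : ℕ => (N : ℝ)) atTop atTop := tendsto_natCast_atTop_atTop
  set p : ℕ → ℝ := fun N => 1/2 + c/(N:ℝ) with hpdef
  set yy : ℕ → ℤ := fun N => ⌊β * (N:ℝ)⌋ with hyydef
  set xx : ℕ → ℤ := fun N => ⌊α * (N:ℝ)⌋ with hxxdef
  set ρ : ℕ → ℝ := fun N => (1 - p N) / p N with hρdef
  set hR : ℕ → ℝ := fun N => (ρ N - (ρ N)^((N:ℤ) - yy N)) / (1 - (ρ N)^((N:ℤ) - yy N))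
    with hRdef
  set hL : ℕ → ℝ := fun N => (1 - (ρ N)^(yy N - 1)) / (1 - (ρ N)^(yy N)) with hLdef
  set r : ℕ → ℝ := fun N => p N * hR N + (1 - p N) * hL N with hrdef
  clear_value p yy xx ρ hR hL r
  -- limit of p
  have hp_lim : Tendsto p atTop (𝓝 (1/2)) := by
    have : Tendsto (fun N : ℕ => c/(N:ℝ)) atTop (𝓝 0) :=
      tendsto_const_div_atTop_nhds_zero_nat c
    have := this.const_add (1/2 : ℝ)
    rw [hpdef]
    simpa using this
  have hρ_lim : Tendsto ρ atTop (𝓝 1) := by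
    rw [hρdef]
    have h1 : Tendsto (fun N => 1 - p N) atTop (𝓝 (1/2)) := by
      have := hp_lim.const_sub 1
      norm_num at this
      exact this
    have := h1.div hp_lim (by norm_num)
    norm_num at this
    exact this
  -- eventual basic facts
  have Ep1 : ∀ᶠ N : ℕ in atTop, 1/2 < p N := by
    filter_upwards [eventually_ge_atTop 1] with N hN1
    have : (0:ℝ) < (N:ℝ) := by positivity
    have : 0 < c/(N:ℝ) := by positivity
    rw [hpdef]
    simp only
    linarith
  have Ep2 : ∀ᶠ N : ℕ in atTop, p N < 1 := by
    have := hp_lim.eventually_lt_const (show (1:ℝ)/2 < 1 by norm_num)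
    exact this
  have Eρ1 : ∀ᶠ N : ℕ in atTop, 0 < ρ N ∧ ρ N < 1 := by
    filter_upwards [Ep1, Ep2] with N h1 h2
    constructor
    · simp only [hρdef]
      apply div_pos <;> linarith
    · simp only [hρdef]
      rw [div_lt_one (by linarith)]
      linarith
  have Ey1 : ∀ᶠ N : ℕ in atTop, 1 ≤ yy N := by
    have : Tendsto (fun N : ℕ => β * (N:ℝ)) atTop atTop := hN.const_mul_atTop hβ0
    filter_upwards [this.eventually_ge_atTop 1] with N h1
    simp only [hyydef]
    exact Int.le_floor.mpr (by exact_mod_cast h1)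
  have Ex1 : ∀ᶠ N : ℕ in atTop, 1 ≤ xx N := by
    have : Tendsto (fun N : ℕ => α * (N:ℝ)) atTop atTop := hN.const_mul_atTop hα0
    filter_upwards [this.eventually_ge_atTop 1] with N h1
    simp only [hxxdef]
    exact Int.le_floor.mpr (by exact_mod_cast h1)
  have ExN : ∀ᶠ N : ℕ in atTop, xx N < (N:ℤ) := by
    filter_upwards [eventually_ge_atTop 1] with N h1
    simp only [hxxdef]
    apply Int.floor_lt.mpr
    push_cast
    nlinarith [show (1:ℝ) ≤ (N:ℝ) from by exact_mod_cast h1]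
  have EyN : ∀ᶠ N : ℕ in atTop, yy N < (N:ℤ) := by
    filter_upwards [eventually_ge_atTop 1] with N h1
    simp only [hyydef]
    apply Int.floor_lt.mpr
    push_cast
    nlinarith [show (1:ℝ) ≤ (N:ℝ) from by exact_mod_cast h1]
  have Exy : ∀ᶠ N : ℕ in atTop, xx N ≠ yy N := by
    have habs : (0:ℝ) < |β - α| := by
      rw [abs_pos, sub_ne_zero]
      exact fun h => hαβ h.symm
    have : Tendsto (fun N : ℕ => |β - α| * (N:ℝ)) atTop atTop := hN.const_mul_atTop habs
    filter_upwards [this.eventually_ge_atTop 2] with N h2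
    rcases lt_or_gt_of_ne hαβ with hab | hab
    · have hab' : |β - α| = β - α := abs_of_pos (by linarith)
      rw [hab'] at h2
      have h3 : α * (N:ℝ) + 1 ≤ β * (N:ℝ) - 1 := by nlinarith
      have h4 : (xx N : ℝ) ≤ α * N := by simp only [hxxdef]; exact Int.floor_le _
      have h5 : β * (N:ℝ) - 1 < (yy N : ℝ) := by simp only [hyydef]; exact Int.sub_one_lt_floor _
      intro h
      rw [h] at h4
      linarith
    · have hab' : |β - α| = -(β - α) := abs_of_neg (by linarith)
      rw [hab'] at h2
      have h3 : β * (N:ℝ) + 1 ≤ α * (N:ℝ) - 1 := by nlinarith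
      have h4 : (yy N : ℝ) ≤ β * N := by simp only [hyydef]; exact Int.floor_le _
      have h5 : α * (N:ℝ) - 1 < (xx N : ℝ) := by simp only [hxxdef]; exact Int.sub_one_lt_floor _
      intro h
      rw [← h] at h4
      linarith
  -- quantitative exponent bounds
  have Eexp : ∀ᶠ N : ℕ in atTop,
      (ρ N)^(yy N) ≤ Real.exp (-(c*β)) ∧
      (ρ N)^((N:ℤ) - yy N) ≤ Real.exp (-(c*(1-β))) := by
    have hβN : Tendsto (fun N : ℕ => β * (N:ℝ)) atTop atTop := hN.const_mul_atTop hβ0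
    filter_upwards [Ep1, Ep2, Eρ1, Ey1, EyN, hβN.eventually_ge_atTop 2,
      eventually_gt_atTop 0] with N h1 h2 ⟨hρ0, hρ1⟩ hy1 hyN hβ2 hN0
    have hNR : (0:ℝ) < (N:ℝ) := by exact_mod_cast hN0
    -- 1 - ρ N ≥ 2c/N
    have hp0 : (0:ℝ) < p N := by linarith
    have h1ρ : 1 - ρ N = (2 * (c/(N:ℝ))) / p N := by
      simp only [hρdef, hpdef]
      field_simp
      ring
    have h1ρ_ge : 2 * (c/(N:ℝ)) ≤ 1 - ρ N := by
      rw [h1ρ]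
      rw [le_div_iff₀ hp0]
      have hcN : 0 < c/(N:ℝ) := by positivity
      nlinarith
    constructor
    · apply zpow_le_exp_aux (le_of_lt hρ0) (by omega)
      -- c*β ≤ (1 - ρ N) * yy N
      have hyR : β * (N:ℝ) - 1 < (yy N : ℝ) := by
        simp only [hyydef]; exact Int.sub_one_lt_floor _
      have hy_half : β * (N:ℝ) / 2 ≤ (yy N : ℝ) := by linarith
      have hy_pos : (0:ℝ) ≤ (yy N : ℝ) := by exact_mod_cast (by omega : (0:ℤ) ≤ yy N)
      calc c*β = (2*(c/(N:ℝ))) * (β * (N:ℝ)/2) := by field_simp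
        _ ≤ (2*(c/(N:ℝ))) * (yy N : ℝ) := by
            apply mul_le_mul_of_nonneg_left hy_half (by positivity)
        _ ≤ (1 - ρ N) * (yy N : ℝ) := by
            apply mul_le_mul_of_nonneg_right h1ρ_ge hy_pos
    · apply zpow_le_exp_aux (le_of_lt hρ0) (by omega)
      have hyR : (yy N : ℝ) ≤ β * (N:ℝ) := by
        simp only [hyydef]; exact Int.floor_le _
      have hm : (1-β) * (N:ℝ) ≤ ((N:ℤ) - yy N : ℤ) := by
        push_cast
        nlinarith
      have hm0 : (0:ℝ) ≤ (((N:ℤ) - yy N : ℤ) : ℝ) := by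
        exact_mod_cast (by omega : (0:ℤ) ≤ (N:ℤ) - yy N)
      calc c*(1-β) = (2*(c/(N:ℝ))) * ((1-β) * (N:ℝ)/2) := by field_simp
        _ ≤ (2*(c/(N:ℝ))) * ((1-β) * (N:ℝ)) := by
            have h1β : (0:ℝ) < 1 - β := by linarith
            have : (0:ℝ) ≤ (1-β)*(N:ℝ) := by positivity
            apply mul_le_mul_of_nonneg_left (by linarith) (by positivity)
        _ ≤ (2*(c/(N:ℝ))) * (((N:ℤ) - yy N : ℤ) : ℝ) := by
            apply mul_le_mul_of_nonneg_left hm (by positivity)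
        _ ≤ (1 - ρ N) * (((N:ℤ) - yy N : ℤ) : ℝ) := by
            apply mul_le_mul_of_nonneg_right h1ρ_ge hm0
  -- δ constants
  set δ1 : ℝ := 1 - Real.exp (-(c*β)) with hδ1
  set δ2 : ℝ := 1 - Real.exp (-(c*(1-β))) with hδ2
  clear_value δ1 δ2
  have hδ1_pos : 0 < δ1 := by
    rw [hδ1]
    have : Real.exp (-(c*β)) < 1 := Real.exp_lt_one_iff.mpr (by nlinarith)
    linarith
  have hδ2_pos : 0 < δ2 := by
    rw [hδ2]
    have : Real.exp (-(c*(1-β))) < 1 := Real.exp_lt_one_iff.mpr (by nlinarith)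
    linarith
  -- hL and hR squeezes
  have EhL : ∀ᶠ N : ℕ in atTop, 1 - (1 - ρ N)/δ1 ≤ hL N ∧ hL N ≤ 1 := by
    filter_upwards [Eρ1, Ey1, Eexp] with N ⟨hρ0, hρ1⟩ hy1 ⟨he1, he2⟩
    have hmono : (ρ N)^(yy N) ≤ (ρ N)^(yy N - 1) :=
      zpow_le_zpow_right_of_le_one₀ hρ0 (le_of_lt hρ1) (by omega)
    have hles : (ρ N)^(yy N - 1) ≤ 1 := zpow_le_one₀ hρ0 (le_of_lt hρ1) (by omega)
    have hyd : 0 < 1 - (ρ N)^(yy N) := by linarith [lt_of_le_of_lt he1 (by linarith : Real.exp (-(c*β)) < 1)]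
    have hden : δ1 ≤ 1 - (ρ N)^(yy N) := by rw [hδ1]; linarith
    constructor
    · have h1 : 1 - hL N = ((ρ N)^(yy N - 1) - (ρ N)^(yy N)) / (1 - (ρ N)^(yy N)) := by
        simp only [hLdef]
        rw [eq_div_iff (ne_of_gt hyd), sub_mul, div_mul_cancel₀ _ (ne_of_gt hyd)]
        ring
      have h2 : (ρ N)^(yy N - 1) - (ρ N)^(yy N) ≤ 1 - ρ N := by
        have hsplit : (ρ N)^(yy N) = (ρ N)^(yy N - 1) * ρ N := by
          rw [← zpow_add_one₀ (ne_of_gt hρ0)]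
          norm_num
        rw [hsplit]
        calc (ρ N)^(yy N - 1) - (ρ N)^(yy N - 1) * ρ N
            = (ρ N)^(yy N - 1) * (1 - ρ N) := by ring
          _ ≤ 1 * (1 - ρ N) := mul_le_mul_of_nonneg_right hles (by linarith)
          _ = 1 - ρ N := one_mul _
      have h3 : 1 - hL N ≤ (1 - ρ N) / δ1 := by
        rw [h1]
        apply div_le_div₀ (by linarith) h2 hδ1_pos hden
      linarith
    · simp only [hLdef]
      apply div_le_one_of_le₀ (by linarith) (by linarith)
  have EhR : ∀ᶠ N : ℕ in atTop, 1 - (1 - ρ N)/δ2 ≤ hR N ∧ hR N ≤ 1 := by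
    filter_upwards [Eρ1, EyN, Ey1, Eexp] with N ⟨hρ0, hρ1⟩ hyN hy1 ⟨he1, he2⟩
    have hyd : 0 < 1 - (ρ N)^((N:ℤ) - yy N) := by
      linarith [lt_of_le_of_lt he2 (by linarith : Real.exp (-(c*(1-β))) < 1)]
    have hden : δ2 ≤ 1 - (ρ N)^((N:ℤ) - yy N) := by rw [hδ2]; linarith
    constructor
    · have h1 : 1 - hR N = (1 - ρ N) / (1 - (ρ N)^((N:ℤ) - yy N)) := by
        simp only [hRdef]
        rw [eq_div_iff (ne_of_gt hyd), sub_mul, div_mul_cancel₀ _ (ne_of_gt hyd)]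
        ring
      have h3 : 1 - hR N ≤ (1 - ρ N) / δ2 := by
        rw [h1]
        apply div_le_div₀ (by linarith) (le_refl _) hδ2_pos hden
      linarith
    · simp only [hRdef]
      apply div_le_one_of_le₀ (by linarith) (by linarith)
  -- limits of hL, hR
  have hlo_lim1 : Tendsto (fun N => 1 - (1 - ρ N)/δ1) atTop (𝓝 1) := by
    have h0 : Tendsto (fun N => (1 - ρ N)/δ1) atTop (𝓝 0) := by
      have := (hρ_lim.const_sub 1).div_const δ1
      simpa using this
    have := h0.const_sub 1
    simpa using this
  have hlo_lim2 : Tendsto (fun N => 1 - (1 - ρ N)/δ2) atTop (𝓝 1) := by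
    have h0 : Tendsto (fun N => (1 - ρ N)/δ2) atTop (𝓝 0) := by
      have := (hρ_lim.const_sub 1).div_const δ2
      simpa using this
    have := h0.const_sub 1
    simpa using this
  have hL_lim : Tendsto hL atTop (𝓝 1) :=
    tendsto_of_tendsto_of_tendsto_of_le_of_le' hlo_lim1 tendsto_const_nhds
      (EhL.mono fun N h => h.1) (EhL.mono fun N h => h.2)
  have hR_lim : Tendsto hR atTop (𝓝 1) :=
    tendsto_of_tendsto_of_tendsto_of_le_of_le' hlo_lim2 tendsto_const_nhds
      (EhR.mono fun N h => h.1) (EhR.mono fun N h => h.2)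
  -- limit of r
  have hr_lim : Tendsto r atTop (𝓝 1) := by
    have h1 : Tendsto (fun N => p N * hR N) atTop (𝓝 (1/2 * 1)) := hp_lim.mul hR_lim
    have h2 : Tendsto (fun N => (1 - p N) * hL N) atTop (𝓝 ((1 - 1/2) * 1)) :=
      (hp_lim.const_sub 1).mul hL_lim
    have := h1.add h2
    norm_num at this
    rw [hrdef]
    exact this
  -- limit of the candidate expression
  have hcand_lim : Tendsto (fun N => 1 / (1 + r N)) atTop (𝓝 (1/2)) := by
    have h2 : Tendsto (fun N => 1 + r N) atTop (𝓝 2) := by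
      have := hr_lim.const_add 1
      norm_num at this
      exact this
    have h3 := (tendsto_const_nhds (x := (1:ℝ)) (f := atTop)).div h2 (by norm_num)
    exact h3
  -- conclude by eventual equality
  apply Tendsto.congr' _ hcand_lim
  filter_upwards [Ep1, Ep2, Ex1, Ey1, ExN, EyN, Exy] with N h1 h2 h3 h4 h5 h6 h7
  have hk := key N (p N) h1 h2 (xx N) (yy N) (by omega) h5 (by omega) h6 h7
  simp only [hrdef, hRdef, hLdef, hρdef]
  have hp' : (1:ℝ)/2 + c/(N:ℝ) = p N := by simp [hpdef]
  have hx' : ⌊α * (N:ℝ)⌋ = xx N := by simp [hxxdef]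
  have hy' : ⌊β * (N:ℝ)⌋ = yy N := by simp [hyydef]
  rw [hp', hx', hy']
  exact hk.symm
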